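/- History-deterministic Parikh automata are closed under intersection: given HDPAs (A₁, C₁) and (A₂, C₂) over the same alphabet Σ, there exists an HDPA (A', C') with L(A', C') = L(A₁, C₁) ∩ L(A₂, C₂). -/

import Mathlib

open scoped BigOperators

/-- A set `C ⊆ ℕ^d` is linear if `C = {v₀ + Σᵢ cᵢ vᵢ | cᵢ ∈ ℕ}` for some vectors. -/
def IsLinear {d : ℕ} (C : Set (Fin d → ℕ)) : Prop :=
  ∃ (k : ℕ) (v₀ : Fin d → ℕ) (v : Fin k → Fin d → ℕ),
    C = {x | ∃ c : Fin k → ℕ, x = v₀ + ∑ i, c i • v i}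

/-- A set is semilinear if it is a finite union of linear sets. -/
def IsSemilinear {d : ℕ} (C : Set (Fin d → ℕ)) : Prop :=
  ∃ (m : ℕ) (Cs : Fin m → Set (Fin d → ℕ)),
    (∀ i, IsLinear (Cs i)) ∧ C = ⋃ i, Cs i

/-- A Parikh automaton over alphabet `A` of dimension `d`: an NFA whose transitions are
labeled by a letter and a vector in `ℕ^d`, together with a semilinear acceptance set `C`. -/
structure PA (A : Type) (d : ℕ) where
  n : ℕ
  init : Fin n
  final : Set (Fin n)
  trans : Set (Fin n × (A × (Fin d → ℕ)) × Fin n)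
  transFin : trans.Finite
  C : Set (Fin d → ℕ)
  hC : IsSemilinear C

namespace PA

variable {A : Type} {d : ℕ}

/-- The type of transitions of a Parikh automaton. -/
abbrev Tr (P : PA A d) := Fin P.n × (A × (Fin d → ℕ)) × Fin P.n

/-- The word processed by a run (its Σ-projection). -/
def word (P : PA A d) (ρ : List P.Tr) : List A := ρ.map (fun t => t.2.1.1)

/-- The extended Parikh image of a run: the sum of the vector labels. -/
def image (P : PA A d) (ρ : List P.Tr) : Fin d → ℕ := (ρ.map (fun t => t.2.1.2)).sum

/-- The last state of a run (the initial state for the empty run). -/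
def lastState (P : PA A d) (ρ : List P.Tr) : Fin P.n :=
  (ρ.getLast?).elim P.init (fun t => t.2.2)

/-- A run: a sequence of transitions of `P`, consecutively matching, starting in the
initial state. -/
def IsRun (P : PA A d) (ρ : List P.Tr) : Prop :=
  (∀ t ∈ ρ, t ∈ P.trans) ∧
  ρ.Chain' (fun t t' => t.2.2 = t'.1) ∧
  (∀ t, ρ.head? = some t → t.1 = P.init)

/-- An accepting run: a run ending in an accepting state whose extended Parikh image
lies in `C`. -/
def Accepting (P : PA A d) (ρ : List P.Tr) : Prop :=
  P.IsRun ρ ∧ P.lastState ρ ∈ P.final ∧ P.image ρ ∈ P.C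

/-- The language of a Parikh automaton. -/
def Lang (P : PA A d) : Set (List A) :=
  {w | ∃ ρ, P.Accepting ρ ∧ P.word ρ = w}

/-- Determinism: for every state and letter there is at most one outgoing transition. -/
def Deterministic (P : PA A d) : Prop :=
  ∀ (q : Fin P.n) (a : A),
    Set.Subsingleton {p : Fin P.n × (Fin d → ℕ) | (q, (a, p.2), p.1) ∈ P.trans}

/-- Iterating a resolver `r` (fed the history and the next letter) along a word;
`pre` is the prefix read so far. -/
def iterResAux (P : PA A d) (r : List A → A → P.Tr) : List A → List A → List P.Tr
  | _, [] => []
  | pre, a :: rest => r pre a :: P.iterResAux r (pre ++ [a]) rest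

/-- The run built by iterating the resolver `r` letter by letter along `w`. -/
def iterRes (P : PA A d) (r : List A → A → P.Tr) (w : List A) : List P.Tr :=
  P.iterResAux r [] w

/-- `r` is a resolver: for every accepted word `w`, iterating `r` along `w` yields an
accepting run processing `w`. -/
def IsResolver (P : PA A d) (r : List A → A → P.Tr) : Prop :=
  ∀ w ∈ P.Lang, P.Accepting (P.iterRes r w) ∧ P.word (P.iterRes r w) = w

/-- A Parikh automaton is history-deterministic if it has a resolver. -/
def HistoryDeterministic (P : PA A d) : Prop := ∃ r, P.IsResolver r

end PA


namespace HDInterAux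

/-! ### Semilinear sets: closure under "product" in `Fin (d₁ + d₂) → ℕ` -/

lemma sum_comp_left {d₁ d₂ k₁ k₂ : ℕ} (v₀ : Fin d₁ → ℕ) (u₀ : Fin d₂ → ℕ)
    (v : Fin k₁ → Fin d₁ → ℕ) (u : Fin k₂ → Fin d₂ → ℕ) (c : Fin (k₁ + k₂) → ℕ) (i : Fin d₁) :
    (Fin.append v₀ u₀ + ∑ j, c j •
        Fin.append (fun i' => Fin.append (v i') 0) (fun j' => Fin.append 0 (u j')) j)
      (Fin.castAdd d₂ i)
      = (v₀ + ∑ j, c (Fin.castAdd k₂ j) • v j) i := by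
  simp only [Pi.add_apply, Finset.sum_apply, Pi.smul_apply, smul_eq_mul, Fin.sum_univ_add,
    Fin.append_left, Fin.append_right, Pi.zero_apply, mul_zero, Finset.sum_const_zero, add_zero]

lemma sum_comp_right {d₁ d₂ k₁ k₂ : ℕ} (v₀ : Fin d₁ → ℕ) (u₀ : Fin d₂ → ℕ)
    (v : Fin k₁ → Fin d₁ → ℕ) (u : Fin k₂ → Fin d₂ → ℕ) (c : Fin (k₁ + k₂) → ℕ) (i : Fin d₂) :
    (Fin.append v₀ u₀ + ∑ j, c j •
        Fin.append (fun i' => Fin.append (v i') 0) (fun j' => Fin.append 0 (u j')) j)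
      (Fin.natAdd d₁ i)
      = (u₀ + ∑ j, c (Fin.natAdd k₁ j) • u j) i := by
  simp only [Pi.add_apply, Finset.sum_apply, Pi.smul_apply, smul_eq_mul, Fin.sum_univ_add,
    Fin.append_left, Fin.append_right, Pi.zero_apply, mul_zero, Finset.sum_const_zero, zero_add]

lemma isLinear_prod {d₁ d₂ : ℕ} {L : Set (Fin d₁ → ℕ)} {M : Set (Fin d₂ → ℕ)}
    (hL : IsLinear L) (hM : IsLinear M) :
    IsLinear {w : Fin (d₁ + d₂) → ℕ |
      (fun i => w (Fin.castAdd d₂ i)) ∈ L ∧ (fun i => w (Fin.natAdd d₁ i)) ∈ M} := by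
  obtain ⟨k₁, v₀, v, rfl⟩ := hL
  obtain ⟨k₂, u₀, u, rfl⟩ := hM
  refine ⟨k₁ + k₂, Fin.append v₀ u₀,
    Fin.append (fun i' => Fin.append (v i') 0) (fun j' => Fin.append 0 (u j')), ?_⟩
  ext w
  simp only [Set.mem_setOf_eq]
  constructor
  · rintro ⟨⟨c, hc⟩, ⟨c', hc'⟩⟩
    refine ⟨Fin.append c c', ?_⟩
    funext x
    induction x using Fin.addCases with
    | left i =>
      rw [sum_comp_left]
      have : ∀ j, Fin.append c c' (Fin.castAdd k₂ j) = c j := fun j => Fin.append_left c c' j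
      simp only [this]
      exact congrFun hc i
    | right i =>
      rw [sum_comp_right]
      have : ∀ j, Fin.append c c' (Fin.natAdd k₁ j) = c' j := fun j => Fin.append_right c c' j
      simp only [this]
      exact congrFun hc' i
  · rintro ⟨c, rfl⟩
    constructor
    · exact ⟨fun j => c (Fin.castAdd k₂ j), funext fun i => sum_comp_left v₀ u₀ v u c i⟩
    · exact ⟨fun j => c (Fin.natAdd k₁ j), funext fun i => sum_comp_right v₀ u₀ v u c i⟩

lemma isSemilinear_prod {d₁ d₂ : ℕ} {C₁ : Set (Fin d₁ → ℕ)} {C₂ : Set (Fin d₂ → ℕ)}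
    (h₁ : IsSemilinear C₁) (h₂ : IsSemilinear C₂) :
    IsSemilinear {w : Fin (d₁ + d₂) → ℕ |
      (fun i => w (Fin.castAdd d₂ i)) ∈ C₁ ∧ (fun i => w (Fin.natAdd d₁ i)) ∈ C₂} := by
  obtain ⟨m₁, Cs₁, hlin₁, rfl⟩ := h₁
  obtain ⟨m₂, Cs₂, hlin₂, rfl⟩ := h₂
  refine ⟨m₁ * m₂, fun p => {w : Fin (d₁ + d₂) → ℕ |
      (fun i => w (Fin.castAdd d₂ i)) ∈ Cs₁ (finProdFinEquiv.symm p).1 ∧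
      (fun i => w (Fin.natAdd d₁ i)) ∈ Cs₂ (finProdFinEquiv.symm p).2},
    fun p => isLinear_prod (hlin₁ _) (hlin₂ _), ?_⟩
  ext w
  simp only [Set.mem_setOf_eq, Set.mem_iUnion]
  constructor
  · rintro ⟨⟨i, hi⟩, ⟨j, hj⟩⟩
    refine ⟨finProdFinEquiv (i, j), ?_, ?_⟩ <;> simp [hi, hj]
  · rintro ⟨p, hp1, hp2⟩
    exact ⟨⟨_, hp1⟩, ⟨_, hp2⟩⟩

/-! ### The product automaton -/

variable {A : Type} {d₁ d₂ : ℕ} (P₁ : PA A d₁) (P₂ : PA A d₂)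

/-- Transition type of the product automaton. -/
abbrev PTr := Fin (P₁.n * P₂.n) × (A × (Fin (d₁ + d₂) → ℕ)) × Fin (P₁.n * P₂.n)

/-- Combine a pair of transitions into a product transition (letter taken from the first). -/
def combine (c : P₁.Tr × P₂.Tr) : PTr P₁ P₂ :=
  (finProdFinEquiv (c.1.1, c.2.1),
   (c.1.2.1.1, Fin.append c.1.2.1.2 c.2.2.1.2),
   finProdFinEquiv (c.1.2.2, c.2.2.2))

/-- First projection of a product transition. -/
def proj₁ (t : PTr P₁ P₂) : P₁.Tr :=
  ((finProdFinEquiv.symm t.1).1, (t.2.1.1, fun i => t.2.1.2 (Fin.castAdd d₂ i)),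
   (finProdFinEquiv.symm t.2.2).1)

/-- Second projection of a product transition. -/
def proj₂ (t : PTr P₁ P₂) : P₂.Tr :=
  ((finProdFinEquiv.symm t.1).2, (t.2.1.1, fun i => t.2.1.2 (Fin.natAdd d₁ i)),
   (finProdFinEquiv.symm t.2.2).2)

/-- The product Parikh automaton. -/
def prodPA : PA A (d₁ + d₂) where
  n := P₁.n * P₂.n
  init := finProdFinEquiv (P₁.init, P₂.init)
  final := {q | (finProdFinEquiv.symm q).1 ∈ P₁.final ∧ (finProdFinEquiv.symm q).2 ∈ P₂.final}
  trans := combine P₁ P₂ '' {c | c.1 ∈ P₁.trans ∧ c.2 ∈ P₂.trans ∧ c.1.2.1.1 = c.2.2.1.1}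
  transFin := Set.Finite.image _ (Set.Finite.subset (P₁.transFin.prod P₂.transFin)
    (fun c hc => Set.mem_prod.2 ⟨hc.1, hc.2.1⟩))
  C := {w | (fun i => w (Fin.castAdd d₂ i)) ∈ P₁.C ∧ (fun i => w (Fin.natAdd d₁ i)) ∈ P₂.C}
  hC := isSemilinear_prod P₁.hC P₂.hC

lemma proj₁_combine (c : P₁.Tr × P₂.Tr) : proj₁ P₁ P₂ (combine P₁ P₂ c) = c.1 := by
  obtain ⟨⟨q, ⟨a, x⟩, q'⟩, ⟨p, ⟨b, y⟩, p'⟩⟩ := c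
  simp only [proj₁, combine, Equiv.symm_apply_apply]
  have hv : (fun i => Fin.append x y (Fin.castAdd d₂ i)) = x :=
    funext fun i => Fin.append_left x y i
  rw [hv]

lemma proj₂_combine (c : P₁.Tr × P₂.Tr) (h : c.1.2.1.1 = c.2.2.1.1) :
    proj₂ P₁ P₂ (combine P₁ P₂ c) = c.2 := by
  obtain ⟨⟨q, ⟨a, x⟩, q'⟩, ⟨p, ⟨b, y⟩, p'⟩⟩ := c
  simp only at h
  subst h
  simp only [proj₂, combine, Equiv.symm_apply_apply]
  have hv : (fun i => Fin.append x y (Fin.natAdd d₁ i)) = y :=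
    funext fun i => Fin.append_right x y i
  rw [hv]

lemma good_combine (c : P₁.Tr × P₂.Tr) (h : c.1.2.1.1 = c.2.2.1.1) :
    combine P₁ P₂ (proj₁ P₁ P₂ (combine P₁ P₂ c), proj₂ P₁ P₂ (combine P₁ P₂ c))
      = combine P₁ P₂ c := by
  rw [proj₁_combine, proj₂_combine P₁ P₂ c h]

/-! ### Words and images of projected runs -/

lemma word_map₁ (ρ : List (PTr P₁ P₂)) :
    P₁.word (ρ.map (proj₁ P₁ P₂)) = (prodPA P₁ P₂).word ρ := by
  simp only [PA.word, List.map_map]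
  rfl

lemma word_map₂ (ρ : List (PTr P₁ P₂)) :
    P₂.word (ρ.map (proj₂ P₁ P₂)) = (prodPA P₁ P₂).word ρ := by
  simp only [PA.word, List.map_map]
  rfl

lemma image_map₁ (ρ : List (PTr P₁ P₂)) (i : Fin d₁) :
    P₁.image (ρ.map (proj₁ P₁ P₂)) i = (prodPA P₁ P₂).image ρ (Fin.castAdd d₂ i) := by
  induction ρ with
  | nil => rfl
  | cons t ρ ih =>
    simp only [PA.image, List.map_cons, List.sum_cons, Pi.add_apply] at ih ⊢
    rw [ih]
    rfl

lemma image_map₂ (ρ : List (PTr P₁ P₂)) (i : Fin d₂) :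
    P₂.image (ρ.map (proj₂ P₁ P₂)) i = (prodPA P₁ P₂).image ρ (Fin.natAdd d₁ i) := by
  induction ρ with
  | nil => rfl
  | cons t ρ ih =>
    simp only [PA.image, List.map_cons, List.sum_cons, Pi.add_apply] at ih ⊢
    rw [ih]
    rfl

lemma lastState_map₁ (ρ : List (PTr P₁ P₂)) :
    P₁.lastState (ρ.map (proj₁ P₁ P₂)) = (finProdFinEquiv.symm ((prodPA P₁ P₂).lastState ρ)).1 := by
  simp only [PA.lastState, List.getLast?_map]
  change _ = (finProdFinEquiv.symm ((@List.getLast? (PTr P₁ P₂) ρ).elim (prodPA P₁ P₂).init fun t => t.2.2)).1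
  cases ρ.getLast? with
  | none => simp [prodPA]
  | some t => rfl

lemma lastState_map₂ (ρ : List (PTr P₁ P₂)) :
    P₂.lastState (ρ.map (proj₂ P₁ P₂)) = (finProdFinEquiv.symm ((prodPA P₁ P₂).lastState ρ)).2 := by
  simp only [PA.lastState, List.getLast?_map]
  change _ = (finProdFinEquiv.symm ((@List.getLast? (PTr P₁ P₂) ρ).elim (prodPA P₁ P₂).init fun t => t.2.2)).2
  cases ρ.getLast? with
  | none => simp [prodPA]
  | some t => rfl

/-! ### Accepting runs of the product vs. the components -/

lemma trans_spec {t : PTr P₁ P₂} (h : t ∈ (prodPA P₁ P₂).trans) :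
    proj₁ P₁ P₂ t ∈ P₁.trans ∧ proj₂ P₁ P₂ t ∈ P₂.trans := by
  obtain ⟨c, ⟨hc1, hc2, hc3⟩, rfl⟩ := h
  rw [proj₁_combine, proj₂_combine P₁ P₂ c hc3]
  exact ⟨hc1, hc2⟩

lemma accepting_proj {ρ : List (PTr P₁ P₂)} (h : (prodPA P₁ P₂).Accepting ρ) :
    P₁.Accepting (ρ.map (proj₁ P₁ P₂)) ∧ P₂.Accepting (ρ.map (proj₂ P₁ P₂)) := by
  obtain ⟨⟨htrans, hchain, hhead⟩, hfin, himg⟩ := h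
  constructor
  · refine ⟨⟨?_, ?_, ?_⟩, ?_, ?_⟩
    · intro t' ht'
      obtain ⟨t, ht, rfl⟩ := List.mem_map.1 ht'
      exact (trans_spec P₁ P₂ (htrans t ht)).1
    · rw [List.Chain', List.isChain_map]
      exact hchain.imp fun _ _ hab => congrArg (fun q => (finProdFinEquiv.symm q).1) hab
    · intro t' ht'
      rw [List.head?_map] at ht'
      cases hh : ρ.head? with
      | none => rw [hh] at ht'; simp at ht'
      | some t =>
        rw [hh] at ht'
        simp only [Option.map_some] at ht'
        have hinit := hhead t hh
        have ht'' := Option.some.inj ht'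
        subst ht''
        show (finProdFinEquiv.symm t.1).1 = P₁.init
        rw [hinit]
        show (finProdFinEquiv.symm (finProdFinEquiv (P₁.init, P₂.init))).1 = P₁.init
        simp
    · rw [lastState_map₁]; exact hfin.1
    · have : P₁.image (ρ.map (proj₁ P₁ P₂))
          = fun i => (prodPA P₁ P₂).image ρ (Fin.castAdd d₂ i) :=
        funext fun i => image_map₁ P₁ P₂ ρ i
      rw [this]
      exact himg.1
  · refine ⟨⟨?_, ?_, ?_⟩, ?_, ?_⟩
    · intro t' ht'
      obtain ⟨t, ht, rfl⟩ := List.mem_map.1 ht'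
      exact (trans_spec P₁ P₂ (htrans t ht)).2
    · rw [List.Chain', List.isChain_map]
      exact hchain.imp fun _ _ hab => congrArg (fun q => (finProdFinEquiv.symm q).2) hab
    · intro t' ht'
      rw [List.head?_map] at ht'
      cases hh : ρ.head? with
      | none => rw [hh] at ht'; simp at ht'
      | some t =>
        rw [hh] at ht'
        simp only [Option.map_some] at ht'
        have hinit := hhead t hh
        have ht'' := Option.some.inj ht'
        subst ht''
        show (finProdFinEquiv.symm t.1).2 = P₂.init
        rw [hinit]
        show (finProdFinEquiv.symm (finProdFinEquiv (P₁.init, P₂.init))).2 = P₂.init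
        simp
    · rw [lastState_map₂]; exact hfin.2
    · have : P₂.image (ρ.map (proj₂ P₁ P₂))
          = fun i => (prodPA P₁ P₂).image ρ (Fin.natAdd d₁ i) :=
        funext fun i => image_map₂ P₁ P₂ ρ i
      rw [this]
      exact himg.2

lemma accepting_of_projs {ρ : List (PTr P₁ P₂)}
    (hg : ∀ t ∈ ρ, combine P₁ P₂ (proj₁ P₁ P₂ t, proj₂ P₁ P₂ t) = t)
    (h1 : P₁.Accepting (ρ.map (proj₁ P₁ P₂)))
    (h2 : P₂.Accepting (ρ.map (proj₂ P₁ P₂))) :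
    (prodPA P₁ P₂).Accepting ρ := by
  obtain ⟨⟨htrans1, hchain1, hhead1⟩, hfin1, himg1⟩ := h1
  obtain ⟨⟨htrans2, hchain2, hhead2⟩, hfin2, himg2⟩ := h2
  refine ⟨⟨?_, ?_, ?_⟩, ?_, ?_, ?_⟩
  · intro t ht
    refine ⟨(proj₁ P₁ P₂ t, proj₂ P₁ P₂ t), ⟨?_, ?_, rfl⟩, hg t ht⟩
    · exact htrans1 _ (List.mem_map.2 ⟨t, ht, rfl⟩)
    · exact htrans2 _ (List.mem_map.2 ⟨t, ht, rfl⟩)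
  · rw [List.Chain', List.isChain_map] at hchain1 hchain2
    show List.IsChain (fun t t' : PTr P₁ P₂ => t.2.2 = t'.1) ρ
    rw [List.isChain_iff_getElem] at hchain1 hchain2 ⊢
    intro i hi
    have e1 := hchain1 i hi
    have e2 := hchain2 i hi
    exact finProdFinEquiv.symm.injective (Prod.ext e1 e2)
  · intro t ht
    have h1' := hhead1 (proj₁ P₁ P₂ t) (by rw [List.head?_map]; exact congrArg (Option.map _) ht)
    have h2' := hhead2 (proj₂ P₁ P₂ t) (by rw [List.head?_map]; exact congrArg (Option.map _) ht)
    have : finProdFinEquiv.symm t.1 = (P₁.init, P₂.init) := Prod.ext h1' h2'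
    show t.1 = finProdFinEquiv (P₁.init, P₂.init)
    rw [← this]; exact (Equiv.apply_symm_apply _ _).symm
  · exact ⟨by rw [← lastState_map₁]; exact hfin1, by rw [← lastState_map₂]; exact hfin2⟩
  · have : (fun i => (prodPA P₁ P₂).image ρ (Fin.castAdd d₂ i))
        = P₁.image (ρ.map (proj₁ P₁ P₂)) := (funext fun i => image_map₁ P₁ P₂ ρ i).symm
    rw [this]; exact himg1
  · have : (fun i => (prodPA P₁ P₂).image ρ (Fin.natAdd d₁ i))
        = P₂.image (ρ.map (proj₂ P₁ P₂)) := (funext fun i => image_map₂ P₁ P₂ ρ i).symm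
    rw [this]; exact himg2

/-! ### Zipping two runs with the same word -/

def zipC : List P₁.Tr → List P₂.Tr → List (PTr P₁ P₂)
  | t₁ :: l₁, t₂ :: l₂ => combine P₁ P₂ (t₁, t₂) :: zipC l₁ l₂
  | _, _ => []

lemma zip_proj₁ : ∀ (ρ₁ : List P₁.Tr) (ρ₂ : List P₂.Tr), P₁.word ρ₁ = P₂.word ρ₂ →
    (zipC P₁ P₂ ρ₁ ρ₂).map (proj₁ P₁ P₂) = ρ₁
  | [], [], _ => rfl
  | [], _ :: _, h => by simp [PA.word] at h
  | _ :: _, [], h => by simp [PA.word] at h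
  | t₁ :: l₁, t₂ :: l₂, h => by
    simp only [PA.word, List.map_cons, List.cons.injEq] at h
    simp only [zipC, List.map_cons, proj₁_combine, List.cons.injEq]
    exact ⟨trivial, zip_proj₁ l₁ l₂ h.2⟩

lemma zip_proj₂ : ∀ (ρ₁ : List P₁.Tr) (ρ₂ : List P₂.Tr), P₁.word ρ₁ = P₂.word ρ₂ →
    (zipC P₁ P₂ ρ₁ ρ₂).map (proj₂ P₁ P₂) = ρ₂
  | [], [], _ => rfl
  | [], _ :: _, h => by simp [PA.word] at h
  | _ :: _, [], h => by simp [PA.word] at h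
  | t₁ :: l₁, t₂ :: l₂, h => by
    simp only [PA.word, List.map_cons, List.cons.injEq] at h
    simp only [zipC, List.map_cons, proj₂_combine P₁ P₂ (t₁, t₂) h.1, List.cons.injEq]
    exact ⟨trivial, zip_proj₂ l₁ l₂ h.2⟩

lemma zip_good : ∀ (ρ₁ : List P₁.Tr) (ρ₂ : List P₂.Tr), P₁.word ρ₁ = P₂.word ρ₂ →
    ∀ t ∈ zipC P₁ P₂ ρ₁ ρ₂, combine P₁ P₂ (proj₁ P₁ P₂ t, proj₂ P₁ P₂ t) = t
  | [], [], _ => by intro t ht; simp [zipC] at ht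
  | [], _ :: _, h => by simp [PA.word] at h
  | _ :: _, [], h => by simp [PA.word] at h
  | t₁ :: l₁, t₂ :: l₂, h => by
    simp only [PA.word, List.map_cons, List.cons.injEq] at h
    intro t ht
    rcases List.mem_cons.1 ht with hh | hh
    · subst hh
      exact good_combine P₁ P₂ (t₁, t₂) h.1
    · exact zip_good l₁ l₂ h.2 t hh

/-! ### Language of the product -/

lemma lang_eq : (prodPA P₁ P₂).Lang = P₁.Lang ∩ P₂.Lang := by
  ext w
  constructor
  · rintro ⟨ρ, hacc, rfl⟩
    obtain ⟨ha1, ha2⟩ := accepting_proj P₁ P₂ hacc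
    exact ⟨⟨_, ha1, word_map₁ P₁ P₂ ρ⟩, ⟨_, ha2, word_map₂ P₁ P₂ ρ⟩⟩
  · rintro ⟨⟨ρ₁, h1, rfl⟩, ⟨ρ₂, h2, hw⟩⟩
    have hww : P₁.word ρ₁ = P₂.word ρ₂ := hw.symm
    refine ⟨zipC P₁ P₂ ρ₁ ρ₂, accepting_of_projs P₁ P₂ (zip_good P₁ P₂ ρ₁ ρ₂ hww) ?_ ?_, ?_⟩
    · rw [zip_proj₁ P₁ P₂ ρ₁ ρ₂ hww]; exact h1
    · rw [zip_proj₂ P₁ P₂ ρ₁ ρ₂ hww]; exact h2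
    · rw [← word_map₁, zip_proj₁ P₁ P₂ ρ₁ ρ₂ hww]

/-! ### The combined resolver -/

variable (r₁ : List A → A → P₁.Tr) (r₂ : List A → A → P₂.Tr)

/-- The combined resolver. -/
def res (pre : List A) (a : A) : PTr P₁ P₂ := combine P₁ P₂ (r₁ pre a, r₂ pre a)

lemma iterAux_proj₁ : ∀ (u pre : List A),
    ((prodPA P₁ P₂).iterResAux (res P₁ P₂ r₁ r₂) pre u).map (proj₁ P₁ P₂)
      = P₁.iterResAux r₁ pre u
  | [], _ => rfl
  | a :: u, pre => by
    simp only [PA.iterResAux, List.map_cons]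
    exact congrArg₂ _ (proj₁_combine P₁ P₂ _) (iterAux_proj₁ u (pre ++ [a]))

lemma iterAux_proj₂ : ∀ (u pre : List A),
    P₁.word (P₁.iterResAux r₁ pre u) = u → P₂.word (P₂.iterResAux r₂ pre u) = u →
    ((prodPA P₁ P₂).iterResAux (res P₁ P₂ r₁ r₂) pre u).map (proj₂ P₁ P₂)
      = P₂.iterResAux r₂ pre u
  | [], _, _, _ => rfl
  | a :: u, pre, h1, h2 => by
    simp only [PA.iterResAux, PA.word, List.map_cons, List.cons.injEq] at h1 h2
    simp only [PA.iterResAux, List.map_cons]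
    refine congrArg₂ _ ?_ (iterAux_proj₂ u (pre ++ [a]) h1.2 h2.2)
    exact proj₂_combine P₁ P₂ (r₁ pre a, r₂ pre a) (h1.1.trans h2.1.symm)

lemma iterAux_good : ∀ (u pre : List A),
    P₁.word (P₁.iterResAux r₁ pre u) = u → P₂.word (P₂.iterResAux r₂ pre u) = u →
    ∀ t ∈ (prodPA P₁ P₂).iterResAux (res P₁ P₂ r₁ r₂) pre u,
      combine P₁ P₂ (proj₁ P₁ P₂ t, proj₂ P₁ P₂ t) = t
  | [], _, _, _ => by intro t ht; simp [PA.iterResAux] at ht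
  | a :: u, pre, h1, h2 => by
    simp only [PA.iterResAux, PA.word, List.map_cons, List.cons.injEq] at h1 h2
    intro t ht
    rcases List.mem_cons.1 ht with hh | hh
    · subst hh
      exact good_combine P₁ P₂ (r₁ pre a, r₂ pre a) (h1.1.trans h2.1.symm)
    · exact iterAux_good u (pre ++ [a]) h1.2 h2.2 t hh

lemma prod_hd (h₁ : P₁.HistoryDeterministic) (h₂ : P₂.HistoryDeterministic) :
    (prodPA P₁ P₂).HistoryDeterministic := by
  obtain ⟨r₁, hr₁⟩ := h₁
  obtain ⟨r₂, hr₂⟩ := h₂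
  refine ⟨res P₁ P₂ r₁ r₂, ?_⟩
  intro w hw
  rw [lang_eq] at hw
  obtain ⟨hacc1, hword1⟩ := hr₁ w hw.1
  obtain ⟨hacc2, hword2⟩ := hr₂ w hw.2
  have e1 : ((prodPA P₁ P₂).iterRes (res P₁ P₂ r₁ r₂) w).map (proj₁ P₁ P₂)
      = P₁.iterRes r₁ w := iterAux_proj₁ P₁ P₂ r₁ r₂ w []
  have e2 : ((prodPA P₁ P₂).iterRes (res P₁ P₂ r₁ r₂) w).map (proj₂ P₁ P₂)
      = P₂.iterRes r₂ w := iterAux_proj₂ P₁ P₂ r₁ r₂ w [] hword1 hword2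
  constructor
  · refine accepting_of_projs P₁ P₂ (iterAux_good P₁ P₂ r₁ r₂ w [] hword1 hword2) ?_ ?_
    · rw [e1]; exact hacc1
    · rw [e2]; exact hacc2
  · rw [← word_map₁ P₁ P₂ ((prodPA P₁ P₂).iterRes (res P₁ P₂ r₁ r₂) w), e1]; exact hword1

end HDInterAux


/-- History-deterministic Parikh automata are closed under intersection. -/
theorem hdpa_closed_inter {A : Type} {d₁ d₂ : ℕ} (P₁ : PA A d₁) (P₂ : PA A d₂)
    (h₁ : P₁.HistoryDeterministic) (h₂ : P₂.HistoryDeterministic) :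
    ∃ (d : ℕ) (P : PA A d), P.HistoryDeterministic ∧ P.Lang = P₁.Lang ∩ P₂.Lang := by
  exact ⟨d₁ + d₂, HDInterAux.prodPA P₁ P₂, HDInterAux.prod_hd P₁ P₂ h₁ h₂,
    HDInterAux.lang_eq P₁ P₂⟩
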